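/- There exists an assignment x : {1,2,3,4,5} → ℝ of real numbers such that the unit interval graph on x — distinct u, v adjacent iff |x(u) − x(v)| ≤ 2 — is isomorphic to the Bull Graph, the simple graph on five vertices {1,2,3,4,5} with edge set {12, 13, 23, 14, 25}. Consequently, there is a unit interval graph that admits no conflict-free 1-coloring. -/

import Mathlib

def IsCFColoring {V : Type*} (G : SimpleGraph V) {k : ℕ} (χ : V → Option (Fin k)) : Prop :=
  ∀ v : V, ∃ u ∈ insert v (G.neighborSet v), (χ u).isSome ∧
    ∀ w ∈ insert v (G.neighborSet v), χ w = χ u → w = u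

def HasCFColoring {V : Type*} (G : SimpleGraph V) (k : ℕ) : Prop :=
  ∃ χ : V → Option (Fin k), IsCFColoring G χ

def unitIntervalGraph {V : Type*} (x : V → ℝ) : SimpleGraph V where
  Adj u v := u ≠ v ∧ |x u - x v| ≤ 2
  symm := by
    constructor
    intro u v ⟨h1, h2⟩
    exact ⟨h1.symm, by rwa [abs_sub_comm]⟩
  loopless := by
    constructor
    intro v ⟨h1, _⟩
    exact h1 rfl

def bullGraph : SimpleGraph (Fin 5) :=
  SimpleGraph.fromRel (fun u v =>
    (u = 0 ∧ v = 1) ∨ (u = 0 ∧ v = 2) ∨ (u = 1 ∧ v = 2) ∨ (u = 0 ∧ v = 3) ∨ (u = 1 ∧ v = 4))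

-- aux
noncomputable def bullPts : Fin 5 → ℝ := ![0, 2, 1, -2, 4]

lemma bull_adj_iff (u v : Fin 5) :
    bullGraph.Adj u v ↔ (unitIntervalGraph bullPts).Adj u v := by
  fin_cases u <;> fin_cases v <;>
    simp [bullGraph, unitIntervalGraph, bullPts, SimpleGraph.fromRel_adj] <;> norm_num

noncomputable def bullIso : unitIntervalGraph bullPts ≃g bullGraph :=
  ⟨Equiv.refl _, fun {a b} => bull_adj_iff a b⟩

lemma cf_transfer {V W : Type*} {G : SimpleGraph V} {H : SimpleGraph W}
    (e : G ≃g H) {k : ℕ} (h : HasCFColoring G k) : HasCFColoring H k := by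
  obtain ⟨χ, hχ⟩ := h
  refine ⟨χ ∘ e.symm, fun v => ?_⟩
  obtain ⟨u, hu, hs, huniq⟩ := hχ (e.symm v)
  have key : ∀ w : W, w ∈ insert v (H.neighborSet v) ↔
      e.symm w ∈ insert (e.symm v) (G.neighborSet (e.symm v)) := by
    intro w
    simp only [Set.mem_insert_iff, SimpleGraph.mem_neighborSet]
    constructor
    · rintro (rfl | h)
      · exact Or.inl rfl
      · exact Or.inr (e.symm.map_adj_iff.mpr h)
    · rintro (h | h)
      · exact Or.inl (e.symm.injective h)
      · exact Or.inr (by simpa using e.symm.map_adj_iff.mp h)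
  refine ⟨e u, (key (e u)).mpr (by simpa using hu), by simpa using hs, ?_⟩
  intro w hw hcw
  have := huniq (e.symm w) ((key w).mp hw) (by simpa using hcw)
  have : w = e u := by
    have h2 := congrArg e this
    simpa using h2
  exact this

instance : DecidableRel bullGraph.Adj := fun u v => by
  unfold bullGraph; rw [SimpleGraph.fromRel_adj]; infer_instance

instance (v : Fin 5) : DecidablePred (· ∈ insert v (bullGraph.neighborSet v)) := fun u =>
  decidable_of_iff (u = v ∨ bullGraph.Adj v u) (by simp [eq_comm])

instance (χ : Fin 5 → Option (Fin 1)) : Decidable (IsCFColoring bullGraph χ) := by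
  unfold IsCFColoring; infer_instance

instance : Decidable (HasCFColoring bullGraph 1) := by
  unfold HasCFColoring; infer_instance

lemma bull_not_cf : ¬ HasCFColoring bullGraph 1 := by decide

theorem stmt15 :
    (∃ x : Fin 5 → ℝ, Nonempty (unitIntervalGraph x ≃g bullGraph)) ∧
    (∃ x : Fin 5 → ℝ, ¬ HasCFColoring (unitIntervalGraph x) 1) := by
  refine ⟨⟨bullPts, ⟨bullIso⟩⟩, ⟨bullPts, fun h => bull_not_cf (cf_transfer bullIso h)⟩⟩
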